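/- With J(I) the CA-ML instance constructed from a restricted SMTI instance I as described, in every coalition-stable matching M of J(I) the following holds: whenever a student is matched in M with a 1-credit course c_k (arising from a tied woman w_k), she is also matched in M with its twin 1-credit course c_k'. Consequently, in a coalition-stable matching every matched student is assigned either a single 2-credit course or the pair {c_k, c_k'} of 1-credit courses arising from the same woman. -/

import Mathlib

open Finset

/-- An instance of the Course Allocation problem: students `S`, courses `C`,
mutual acceptability `acc`, strict preferences of students over (acceptable) courses
and of courses over (acceptable) students, positive credits, upper quotas and credit limits. -/
structure CA (S C : Type*) where
  acc : S → C → Prop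
  sPref : S → C → C → Prop
  cPref : C → S → S → Prop
  credits : C → ℚ
  quota : C → ℕ
  limit : S → ℚ
  credits_pos : ∀ c, 0 < credits c
  sPref_irrefl : ∀ s c, ¬ sPref s c c
  sPref_trans : ∀ s c₁ c₂ c₃, sPref s c₁ c₂ → sPref s c₂ c₃ → sPref s c₁ c₃
  sPref_total : ∀ s c₁ c₂, acc s c₁ → acc s c₂ → c₁ ≠ c₂ → sPref s c₁ c₂ ∨ sPref s c₂ c₁
  cPref_irrefl : ∀ c s, ¬ cPref c s s
  cPref_trans : ∀ c s₁ s₂ s₃, cPref c s₁ s₂ → cPref c s₂ s₃ → cPref c s₁ s₃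
  cPref_total : ∀ c s₁ s₂, acc s₁ c → acc s₂ c → s₁ ≠ s₂ → cPref c s₁ s₂ ∨ cPref c s₂ s₁

section CourseAllocation

variable {S C : Type*} [DecidableEq S] [DecidableEq C]

/-- The set `C_M(s)` of courses assigned to student `s` in assignment `M`. -/
def CM (M : Finset (S × C)) (s : S) : Finset C :=
  (M.filter fun p => p.1 = s).image Prod.snd

/-- The set `S_M(c)` of students assigned to course `c` in assignment `M`. -/
def SM (M : Finset (S × C)) (c : C) : Finset S :=
  (M.filter fun p => p.2 = c).image Prod.fst

/-- The total number of credits `O(D)` of a set of courses `D`. -/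
def CA.O (I : CA S C) (D : Finset C) : ℚ := ∑ c ∈ D, I.credits c

/-- `M` is a matching: all pairs acceptable, credit limits and upper quotas respected. -/
def CA.IsMatching (I : CA S C) (M : Finset (S × C)) : Prop :=
  (∀ p ∈ M, I.acc p.1 p.2) ∧
  (∀ s, I.O (CM M s) ≤ I.limit s) ∧
  (∀ c, (SM M c).card ≤ I.quota c)

/-- Feasibility of a matching with respect to families `F` of feasible course sets. -/
def Feasible (F : S → Set (Finset C)) (M : Finset (S × C)) : Prop :=
  ∀ s, CM M s ∈ F s

/-- `F` is a family of downward-feasible constraints: every feasible set consists of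
acceptable courses, and subsets of feasible sets are feasible. -/
def CA.DownwardFeasible (I : CA S C) (F : S → Set (Finset C)) : Prop :=
  (∀ s, ∀ D ∈ F s, ∀ c ∈ D, I.acc s c) ∧
  (∀ s, ∀ D ∈ F s, ∀ D' ⊆ D, D' ∈ F s)

/-- Absent downward-feasible constraints (every set of courses feasible). -/
def noF : S → Set (Finset C) := fun _ => Set.univ

/-- Condition (1) of all blocking definitions: course `c` is undersubscribed in `M`
or prefers `s` to one of its assigned students. -/
def CA.Wants (I : CA S C) (M : Finset (S × C)) (s : S) (c : C) : Prop :=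
  (SM M c).card < I.quota c ∨ ∃ s' ∈ SM M c, I.cPref c s s'

/-- `(s, c)` is a blocking pair of `M` (w.r.t. feasibility constraints `F`). -/
def CA.BlockingPair (I : CA S C) (F : S → Set (Finset C)) (M : Finset (S × C))
    (s : S) (c : C) : Prop :=
  I.acc s c ∧ (s, c) ∉ M ∧ I.Wants M s c ∧
  ∃ D ⊆ CM M s, (∀ c' ∈ D, I.sPref s c c') ∧
    I.O (CM M s) - I.O D + I.credits c ≤ I.limit s ∧
    (CM M s \ D) ∪ {c} ∈ F s

def CA.PairStable (I : CA S C) (F : S → Set (Finset C)) (M : Finset (S × C)) : Prop :=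
  ∀ s c, ¬ I.BlockingPair F M s c

/-- `(s, c)` is a size-blocking pair of `M`: like a blocking pair, but additionally
the dropped set `D` must satisfy `O(D) ≤ O(c)`. -/
def CA.SizeBlockingPair (I : CA S C) (F : S → Set (Finset C)) (M : Finset (S × C))
    (s : S) (c : C) : Prop :=
  I.acc s c ∧ (s, c) ∉ M ∧ I.Wants M s c ∧
  ∃ D ⊆ CM M s, (∀ c' ∈ D, I.sPref s c c') ∧ I.O D ≤ I.credits c ∧
    I.O (CM M s) - I.O D + I.credits c ≤ I.limit s ∧
    (CM M s \ D) ∪ {c} ∈ F s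

def CA.PairSizeStable (I : CA S C) (F : S → Set (Finset C)) (M : Finset (S × C)) : Prop :=
  ∀ s c, ¬ I.SizeBlockingPair F M s c

/-- `(s, B)` is a blocking coalition of `M`. -/
def CA.BlockingCoalition (I : CA S C) (F : S → Set (Finset C)) (M : Finset (S × C))
    (s : S) (B : Finset C) : Prop :=
  B.Nonempty ∧ (∀ c ∈ B, I.acc s c ∧ (s, c) ∉ M) ∧ (∀ c ∈ B, I.Wants M s c) ∧
  ∃ D ⊆ CM M s, (∀ c ∈ B, ∀ c' ∈ D, I.sPref s c c') ∧ I.O D ≤ I.O B ∧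
    I.O (CM M s) - I.O D + I.O B ≤ I.limit s ∧
    (CM M s \ D) ∪ B ∈ F s

def CA.CoalitionStable (I : CA S C) (F : S → Set (Finset C)) (M : Finset (S × C)) : Prop :=
  ∀ s B, ¬ I.BlockingCoalition F M s B

/-- `(s, B)` is a first-blocking coalition of `M`: as a blocking coalition, except that
`s` need only prefer her most-preferred course of `B` to her most-preferred course of `D`
(equivalently, some course of `B` is preferred to every course of `D`; vacuous if `D = ∅`). -/
def CA.FirstBlockingCoalition (I : CA S C) (F : S → Set (Finset C)) (M : Finset (S × C))
    (s : S) (B : Finset C) : Prop :=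
  B.Nonempty ∧ (∀ c ∈ B, I.acc s c ∧ (s, c) ∉ M) ∧ (∀ c ∈ B, I.Wants M s c) ∧
  ∃ D ⊆ CM M s, (∃ b ∈ B, ∀ c' ∈ D, I.sPref s b c') ∧ I.O D ≤ I.O B ∧
    I.O (CM M s) - I.O D + I.O B ≤ I.limit s ∧
    (CM M s \ D) ∪ B ∈ F s

def CA.FirstCoalitionStable (I : CA S C) (F : S → Set (Finset C)) (M : Finset (S × C)) : Prop :=
  ∀ s B, ¬ I.FirstBlockingCoalition F M s B

/-- Every course exactly fills its upper quota. -/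
def CA.CourseComplete (I : CA S C) (M : Finset (S × C)) : Prop :=
  ∀ c, (SM M c).card = I.quota c

/-- Every student takes as many credits as her credit limit. -/
def CA.StudentComplete (I : CA S C) (M : Finset (S × C)) : Prop :=
  ∀ s, I.O (CM M s) = I.limit s

/-- The size of a matching: total number of credits taken by all students. -/
def CA.size [Fintype S] (I : CA S C) (M : Finset (S × C)) : ℚ :=
  ∑ s : S, I.O (CM M s)

/-- `ml` is a master list of students for the instance `I`: a strict total order on
students with which every course's preferences are consistent. -/
def CA.MasterList (I : CA S C) (ml : S → S → Prop) : Prop :=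
  (∀ s, ¬ ml s s) ∧ (∀ s₁ s₂ s₃, ml s₁ s₂ → ml s₂ s₃ → ml s₁ s₃) ∧
  (∀ s₁ s₂, s₁ ≠ s₂ → ml s₁ s₂ ∨ ml s₂ s₁) ∧
  (∀ c s s', I.acc s c → I.acc s' c → (I.cPref c s s' ↔ ml s s'))

end CourseAllocation
/-- Builds a `CA` instance from rank functions (smaller rank = more preferred), with a fixed
injective tie-breaking that never fires when ranks are distinct on acceptable pairs. -/
def CA.ofRanks {S C : Type*} (acc : S → C → Prop) (srank : S → C → ℕ) (crank : C → S → ℕ)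
    (iS : S → ℕ) (iC : C → ℕ) (hiS : Function.Injective iS) (hiC : Function.Injective iC)
    (credits : C → ℚ) (quota : C → ℕ) (limit : S → ℚ) (hpos : ∀ c, 0 < credits c) :
    CA S C where
  acc := acc
  sPref s c c' := acc s c ∧ acc s c' ∧
    (srank s c < srank s c' ∨ (srank s c = srank s c' ∧ iC c < iC c'))
  cPref c s s' := acc s c ∧ acc s' c ∧
    (crank c s < crank c s' ∨ (crank c s = crank c s' ∧ iS s < iS s'))
  credits := credits
  quota := quota
  limit := limit
  credits_pos := hpos
  sPref_irrefl := by rintro s c ⟨-, -, h⟩; omega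
  sPref_trans := by rintro s c₁ c₂ c₃ ⟨h1, -, ha⟩ ⟨-, h2, hb⟩; exact ⟨h1, h2, by omega⟩
  sPref_total := by
    intro s c₁ c₂ h1 h2 hne
    have hi : iC c₁ ≠ iC c₂ := fun h => hne (hiC h)
    rcases Nat.lt_trichotomy (srank s c₁) (srank s c₂) with h | h | h
    · exact Or.inl ⟨h1, h2, Or.inl h⟩
    · rcases Nat.lt_or_ge (iC c₁) (iC c₂) with h' | h'
      · exact Or.inl ⟨h1, h2, Or.inr ⟨h, h'⟩⟩
      · exact Or.inr ⟨h2, h1, Or.inr ⟨h.symm, by omega⟩⟩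
    · exact Or.inr ⟨h2, h1, Or.inl h⟩
  cPref_irrefl := by rintro c s ⟨-, -, h⟩; omega
  cPref_trans := by rintro c s₁ s₂ s₃ ⟨h1, -, ha⟩ ⟨-, h2, hb⟩; exact ⟨h1, h2, by omega⟩
  cPref_total := by
    intro c s₁ s₂ h1 h2 hne
    have hi : iS s₁ ≠ iS s₂ := fun h => hne (hiS h)
    rcases Nat.lt_trichotomy (crank c s₁) (crank c s₂) with h | h | h
    · exact Or.inl ⟨h1, h2, Or.inl h⟩
    · rcases Nat.lt_or_ge (iS s₁) (iS s₂) with h' | h'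
      · exact Or.inl ⟨h1, h2, Or.inr ⟨h, h'⟩⟩
      · exact Or.inr ⟨h2, h1, Or.inr ⟨h.symm, by omega⟩⟩
    · exact Or.inr ⟨h2, h1, Or.inl h⟩
/-- A restricted SMTI instance: `n` men and `n` women (both indexed by `Fin n`), with
mutual acceptability `acc m w`, a strict master list of men given by the injective
ranking `mrank`, and a master list of women with ties given by the ranking `wrank`,
where ties (classes of equal `wrank`) have length at most 2, encoded by the tie-partner
involution `twin` (`twin j = j` exactly when `w_j` is not in a tie).  Every agent's
preference list is the restriction of the other side's master list to her/his
acceptable set. -/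
structure RSMTI (n : ℕ) where
  acc : Fin n → Fin n → Prop
  mrank : Fin n → Fin n
  mrank_inj : Function.Injective mrank
  wrank : Fin n → ℕ
  twin : Fin n → Fin n
  twin_invol : ∀ j, twin (twin j) = j
  wrank_eq_iff : ∀ j k, wrank j = wrank k ↔ (k = j ∨ k = twin j)

/-- `σ` is a complete weakly stable matching of the restricted SMTI instance `I`:
it is a bijection between men and women along acceptable pairs, and no acceptable
pair `(m, w)` exists where both `m` and `w` strictly prefer each other to their
partners (men's preferences come from the women's master list `wrank`, women's
preferences from the men's master list `mrank`). -/
def RSMTI.CompleteWeaklyStable {n : ℕ} (I : RSMTI n) (σ : Equiv.Perm (Fin n)) : Prop :=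
  (∀ m, I.acc m (σ m)) ∧
  ∀ m w, ¬ (I.acc m w ∧ σ m ≠ w ∧
    I.wrank w < I.wrank (σ m) ∧ I.mrank m < I.mrank (σ.symm w))

/-- Woman `w_j` is tied in the women's master list and is the designated member of her
tie (the one whose course gets 1 credit, together with a twin 1-credit course). -/
def RSMTI.des {n : ℕ} (I : RSMTI n) (j : Fin n) : Prop :=
  I.twin j ≠ j ∧ j < I.twin j

instance {n : ℕ} (I : RSMTI n) (j : Fin n) : Decidable (I.des j) :=
  inferInstanceAs (Decidable (I.twin j ≠ j ∧ j < I.twin j))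
/-- Acceptability in `J(I)`: student `m` finds course `c_j = Sum.inl j` acceptable iff
`m` finds `w_j` acceptable; the twin course `c_j' = Sum.inr j` exists (has the same
preference list as `c_j`) only when `w_j` is the designated member of a tie. -/
def RSMTI.Jacc {n : ℕ} (I : RSMTI n) (m : Fin n) : Fin n ⊕ Fin n → Prop
  | .inl j => I.acc m j
  | .inr j => I.des j ∧ I.acc m j

/-- Credits in `J(I)`: a non-designated woman's course has 2 credits, a designated
woman's course `c_j` and its twin `c_j'` have 1 credit each. -/
def RSMTI.Jcredits {n : ℕ} (I : RSMTI n) : Fin n ⊕ Fin n → ℚ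
  | .inl j => if I.des j then 1 else 2
  | .inr _ => 1

/-- Upper quotas in `J(I)`: every course has upper quota 1; the twin slot `Sum.inr j`
of a non-designated woman is a phantom course with quota 0 (acceptable to nobody). -/
def RSMTI.Jquota {n : ℕ} (I : RSMTI n) : Fin n ⊕ Fin n → ℕ
  | .inl _ => 1
  | .inr j => if I.des j then 1 else 0

/-- The rank of a course in the master list of courses of `J(I)`: the women's master
list with each untied `w_j` replaced by `c_j` and each tie `{w_k, w_l}` (with `w_k`
designated) replaced by `c_k ≻ c_l ≻ c_k'`.  All students rank courses accordingly. -/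
def RSMTI.Jrank {n : ℕ} (I : RSMTI n) : Fin n ⊕ Fin n → ℕ
  | .inl j => 3 * I.wrank j + (if I.des j then 0 else if I.twin j ≠ j then 1 else 0)
  | .inr j => 3 * I.wrank j + 2

/-- The CA-ML instance `J(I)` built from the restricted SMTI instance `I`: each man `m_i`
becomes a student `s_i` with credit limit 2; each woman `w_j` becomes a course `c_j`
(plus a twin `c_j'` when `w_j` is a designated tied woman) as described; students rank
courses by the course master list `Jrank` and courses rank students by the men's
master list `mrank`. -/
def RSMTI.J {n : ℕ} (I : RSMTI n) : CA (Fin n) (Fin n ⊕ Fin n) :=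
  CA.ofRanks (fun m c => I.Jacc m c)
    (fun _ c => I.Jrank c)
    (fun _ m => (I.mrank m : ℕ))
    Encodable.encode Encodable.encode Encodable.encode_injective Encodable.encode_injective
    I.Jcredits I.Jquota (fun _ => 2)
    (by
      rintro (j | j)
      · show (0 : ℚ) < (if I.des j then 1 else 2); split <;> norm_num
      · show (0 : ℚ) < 1; norm_num)

section AuxLemmas

variable {S C : Type*} [DecidableEq S] [DecidableEq C]

lemma mem_CM_iff {M : Finset (S × C)} {s : S} {c : C} :
    c ∈ CM M s ↔ (s, c) ∈ M := by
  simp only [CM, Finset.mem_image, Finset.mem_filter, Prod.exists]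
  constructor
  · rintro ⟨a, b, ⟨hab, rfl⟩, rfl⟩; exact hab
  · intro h; exact ⟨s, c, ⟨h, rfl⟩, rfl⟩

lemma mem_SM_iff {M : Finset (S × C)} {s : S} {c : C} :
    s ∈ SM M c ↔ (s, c) ∈ M := by
  simp only [SM, Finset.mem_image, Finset.mem_filter, Prod.exists]
  constructor
  · rintro ⟨a, b, ⟨hab, rfl⟩, rfl⟩; exact hab
  · intro h; exact ⟨s, c, ⟨h, rfl⟩, rfl⟩

end AuxLemmas

namespace RSMTI

variable {n : ℕ} (I : RSMTI n)

lemma J_credits_inl (j : Fin n) :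
    I.J.credits (Sum.inl j) = if I.des j then 1 else 2 := rfl

lemma J_credits_inr (j : Fin n) : I.J.credits (Sum.inr j) = 1 := rfl

lemma J_credits_one_or_two (c : Fin n ⊕ Fin n) :
    I.J.credits c = 1 ∨ I.J.credits c = 2 := by
  rcases c with j | j
  · rw [J_credits_inl]; split_ifs <;> simp
  · exact Or.inl rfl

lemma one_le_J_credits (c : Fin n ⊕ Fin n) : (1 : ℚ) ≤ I.J.credits c := by
  rcases I.J_credits_one_or_two c with h | h <;> rw [h] <;> norm_num

lemma Jrank_inr (j : Fin n) : I.Jrank (Sum.inr j) = 3 * I.wrank j + 2 := rfl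

lemma Jrank_inl_des {j : Fin n} (h : I.des j) :
    I.Jrank (Sum.inl j) = 3 * I.wrank j := by
  simp [RSMTI.Jrank, h]

lemma Jrank_bounds (c : Fin n ⊕ Fin n) (j : Fin n)
    (hc : c = Sum.inl j ∨ c = Sum.inr j) :
    3 * I.wrank j ≤ I.Jrank c ∧ I.Jrank c ≤ 3 * I.wrank j + 2 := by
  rcases hc with rfl | rfl
  · simp only [RSMTI.Jrank]; split_ifs <;> omega
  · simp only [RSMTI.Jrank]; omega

lemma des_wrank_ne {j k : Fin n} (hj : I.des j) (hk : I.des k) (hne : j ≠ k) :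
    I.wrank j ≠ I.wrank k := by
  intro h
  rcases (I.wrank_eq_iff j k).1 h with h' | h'
  · exact hne h'.symm
  · have h1 : j < k := h' ▸ hj.2
    have h2 : I.twin k = j := by rw [h', I.twin_invol]
    have h3 : k < j := h2 ▸ hk.2
    exact absurd h1 (lt_asymm h3)

end RSMTI

/-- In every coalition-stable matching `M` of `J(I)`: whenever a
student is matched with a 1-credit course `c_k` (arising from a tied woman `w_k`, i.e.
`k` designated), she is also matched with its twin course `c_k'`.  Consequently every
matched student is assigned either a single 2-credit course or the pair `{c_k, c_k'}`
of 1-credit courses arising from the same woman. -/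
theorem JofRSMTI_coalitionStable_structure
    {n : ℕ} (I : RSMTI n) (M : Finset (Fin n × (Fin n ⊕ Fin n)))
    (hM : I.J.IsMatching M) (hstab : I.J.CoalitionStable noF M) :
    (∀ s k, I.des k → (s, Sum.inl k) ∈ M → (s, Sum.inr k) ∈ M) ∧
    (∀ s, (CM M s).Nonempty →
      (∃ j, I.J.credits (Sum.inl j) = 2 ∧ CM M s = {Sum.inl j}) ∨
      (∃ k, I.des k ∧ CM M s = {Sum.inl k, Sum.inr k})) := by
  classical
  obtain ⟨hacc, hlim, hquo⟩ := hM
  -- two distinct students cannot share a quota-1 course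
  have conflict : ∀ (c : Fin n ⊕ Fin n) (s₁ s₂ : Fin n), s₁ ≠ s₂ → (s₁, c) ∈ M →
      (s₂, c) ∈ M → I.Jquota c = 1 → False := by
    intro c s₁ s₂ hne h1 h2 hq
    have hsub : ({s₁, s₂} : Finset (Fin n)) ⊆ SM M c := by
      intro x hx
      rcases Finset.mem_insert.1 hx with rfl | hx
      · exact mem_SM_iff.2 h1
      · rw [Finset.mem_singleton] at hx; subst hx; exact mem_SM_iff.2 h2
    have h2c : 2 ≤ (SM M c).card := by
      have := Finset.card_le_card hsub
      rwa [Finset.card_pair hne] at this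
    have hqc : (SM M c).card ≤ 1 := by
      have := hquo c
      have hq' : I.J.quota c = 1 := hq
      omega
    omega
  have key : ∀ N (s : Fin n), (I.mrank s : ℕ) = N → (CM M s).Nonempty →
      (∃ j, I.J.credits (Sum.inl j) = 2 ∧ CM M s = {Sum.inl j}) ∨
      (∃ k, I.des k ∧ CM M s = {Sum.inl k, Sum.inr k}) := by
    intro N
    induction N using Nat.strong_induction_on with
    | _ N IH =>
    intro s hN hne
    -- blocking-coalition helper: s misses course `tgt` of the designated pair of `j`
    -- but holds the other member of the pair
    have blockc : ∀ (j : Fin n) (tgt : Fin n ⊕ Fin n), I.des j → I.acc s j →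
        (tgt = Sum.inl j ∨ tgt = Sum.inr j) → (s, tgt) ∉ M →
        ((s, Sum.inl j) ∈ M ∨ (s, Sum.inr j) ∈ M) →
        ∀ D ⊆ CM M s, (∀ c' ∈ D, I.J.sPref s tgt c') → I.J.O D ≤ 1 →
        I.J.O (CM M s) - I.J.O D + 1 ≤ 2 → False := by
      intro j tgt hdes haccj htgt hnm hpart D hD hDpref hDO harith
      have hacct : I.Jacc s tgt := by
        rcases htgt with rfl | rfl
        · exact haccj
        · exact ⟨hdes, haccj⟩
      have hcred : I.J.credits tgt = 1 := by
        rcases htgt with rfl | rfl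
        · rw [RSMTI.J_credits_inl, if_pos hdes]
        · rfl
      have hqt : I.J.quota tgt = 1 := by
        rcases htgt with rfl | rfl
        · rfl
        · show I.Jquota (Sum.inr j) = 1
          simp [RSMTI.Jquota, hdes]
      have hwants : I.J.Wants M s tgt := by
        rcases Finset.eq_empty_or_nonempty (SM M tgt) with he | ⟨s'', hs''⟩
        · left; rw [he, Finset.card_empty, hqt]; norm_num
        · have hm'' : (s'', tgt) ∈ M := mem_SM_iff.1 hs''
          have hne'' : s'' ≠ s := by rintro rfl; exact hnm hm''
          have hacc'' : I.Jacc s'' tgt := hacc _ hm''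
          rcases Nat.lt_trichotomy ((I.mrank s : Fin n) : ℕ) ((I.mrank s'' : Fin n) : ℕ)
            with hlt | heq | hgt
          · exact Or.inr ⟨s'', hs'', ⟨hacct, hacc'', Or.inl hlt⟩⟩
          · exact absurd ((I.mrank_inj (Fin.val_injective heq)).symm) hne''
          · exfalso
            have hgoal := IH _ (hN ▸ hgt) s'' rfl ⟨tgt, mem_CM_iff.2 hm''⟩
            rcases hgoal with ⟨j', hc2, hCM⟩ | ⟨k', _, hCM⟩
            · have hmem : tgt ∈ CM M s'' := mem_CM_iff.2 hm''
              rw [hCM, Finset.mem_singleton] at hmem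
              rw [hmem] at hcred
              rw [hcred] at hc2; norm_num at hc2
            · have htmem : tgt ∈ ({Sum.inl k', Sum.inr k'} : Finset (Fin n ⊕ Fin n)) :=
                hCM ▸ mem_CM_iff.2 hm''
              have hk' : k' = j := by
                rcases Finset.mem_insert.1 htmem with h | h
                · rcases htgt with h1 | h1
                  · exact Sum.inl.inj (h.symm.trans h1)
                  · rw [h1] at h; exact nomatch h
                · rw [Finset.mem_singleton] at h
                  rcases htgt with h1 | h1
                  · rw [h1] at h; exact nomatch h
                  · exact Sum.inr.inj (h.symm.trans h1)
              subst hk'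
              have hb1 : (s'', Sum.inl k') ∈ M := mem_CM_iff.1 (by rw [hCM]; simp)
              have hb2 : (s'', Sum.inr k') ∈ M := mem_CM_iff.1 (by rw [hCM]; simp)
              rcases hpart with hp | hp
              · exact conflict _ _ _ hne'' hb1 hp rfl
              · exact conflict _ _ _ hne'' hb2 hp (by simp [RSMTI.Jquota, hdes])
      have hOB : I.J.O {tgt} = 1 := by rw [CA.O, Finset.sum_singleton, hcred]
      apply hstab s {tgt}
      refine ⟨Finset.singleton_nonempty _, ?_, ?_, D, hD, ?_, ?_, ?_, trivial⟩
      · intro c hc; rw [Finset.mem_singleton] at hc; subst hc; exact ⟨hacct, hnm⟩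
      · intro c hc; rw [Finset.mem_singleton] at hc; subst hc; exact hwants
      · intro c hc; rw [Finset.mem_singleton] at hc; subst hc; exact hDpref
      · rw [hOB]; exact hDO
      · rw [hOB]; exact harith
    have hlims : I.J.O (CM M s) ≤ 2 := hlim s
    have hOempty : I.J.O (∅ : Finset (Fin n ⊕ Fin n)) = 0 := by
      simp [CA.O]
    have hcard : (CM M s).card ≤ 2 := by
      have h1 : ((CM M s).card : ℚ) ≤ I.J.O (CM M s) := by
        have := Finset.card_nsmul_le_sum (CM M s) I.J.credits 1
          (fun c _ => I.one_le_J_credits c)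
        simpa [nsmul_eq_mul, CA.O] using this
      have h2 : ((CM M s).card : ℚ) ≤ 2 := h1.trans hlims
      exact_mod_cast h2
    have hcard1 : 1 ≤ (CM M s).card := Finset.card_pos.2 hne
    have hcases : (CM M s).card = 1 ∨ (CM M s).card = 2 := by omega
    rcases hcases with h1 | h2
    · -- singleton case
      obtain ⟨c, hc⟩ := Finset.card_eq_one.1 h1
      have hmem : (s, c) ∈ M := mem_CM_iff.1 (by rw [hc]; simp)
      have hOc : I.J.O (CM M s) = I.J.credits c := by
        rw [hc, CA.O, Finset.sum_singleton]
      rcases c with j | j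
      · by_cases hd : I.des j
        · exfalso
          have haj : I.acc s j := hacc _ hmem
          have hnm : (s, Sum.inr j) ∉ M := by
            intro hm
            have := mem_CM_iff.2 hm
            rw [hc, Finset.mem_singleton] at this
            exact nomatch this
          refine blockc j (Sum.inr j) hd haj (Or.inr rfl) hnm (Or.inl hmem) ∅
            (Finset.empty_subset _) (by intro c' hc'; simp at hc') ?_ ?_
          · rw [hOempty]; norm_num
          · rw [hOempty, hOc, RSMTI.J_credits_inl, if_pos hd]; norm_num
        · exact Or.inl ⟨j, by rw [RSMTI.J_credits_inl, if_neg hd], hc⟩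
      · exfalso
        have haccin : I.des j ∧ I.acc s j := hacc _ hmem
        have hnm : (s, Sum.inl j) ∉ M := by
          intro hm
          have := mem_CM_iff.2 hm
          rw [hc, Finset.mem_singleton] at this
          exact nomatch this
        refine blockc j (Sum.inl j) haccin.1 haccin.2 (Or.inl rfl) hnm (Or.inr hmem) ∅
          (Finset.empty_subset _) (by intro c' hc'; simp at hc') ?_ ?_
        · rw [hOempty]; norm_num
        · rw [hOempty, hOc, RSMTI.J_credits_inr]; norm_num
    · -- pair case
      obtain ⟨a, b, hab, hc⟩ := Finset.card_eq_two.1 h2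
      have hma : (s, a) ∈ M := mem_CM_iff.1 (by rw [hc]; simp)
      have hmb : (s, b) ∈ M := mem_CM_iff.1 (by rw [hc]; simp)
      have hOab : I.J.O (CM M s) = I.J.credits a + I.J.credits b := by
        rw [hc, CA.O, Finset.sum_pair hab]
      have ca1 : I.J.credits a = 1 := by
        rcases I.J_credits_one_or_two a with h | h
        · exact h
        · exfalso; have := I.one_le_J_credits b
          rw [hOab, h] at hlims; linarith
      have cb1 : I.J.credits b = 1 := by
        rcases I.J_credits_one_or_two b with h | h
        · exact h
        · exfalso; have := I.one_le_J_credits a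
          rw [hOab, h] at hlims; linarith
      have hO2 : I.J.O (CM M s) = 2 := by rw [hOab, ca1, cb1]; norm_num
      have shape : ∀ c : Fin n ⊕ Fin n, I.J.credits c = 1 → (s, c) ∈ M →
          ∃ j, I.des j ∧ I.acc s j ∧ (c = Sum.inl j ∨ c = Sum.inr j) := by
        rintro (j | j) hc1 hm
        · have hd : I.des j := by
            by_contra hd
            rw [RSMTI.J_credits_inl, if_neg hd] at hc1; norm_num at hc1
          exact ⟨j, hd, hacc _ hm, Or.inl rfl⟩
        · have h' : I.des j ∧ I.acc s j := hacc _ hm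
          exact ⟨j, h'.1, h'.2, Or.inr rfl⟩
      obtain ⟨j, hdj, haj, hja⟩ := shape a ca1 hma
      obtain ⟨k, hdk, hak, hkb⟩ := shape b cb1 hmb
      by_cases hjk : j = k
      · subst hjk
        rcases hja with rfl | rfl <;> rcases hkb with rfl | rfl
        · exact absurd rfl hab
        · exact Or.inr ⟨j, hdj, hc⟩
        · exact Or.inr ⟨j, hdj, by rw [hc, Finset.pair_comm]⟩
        · exact absurd rfl hab
      · exfalso
        have pairblock : ∀ (a b : Fin n ⊕ Fin n) (j k : Fin n),
            CM M s = {a, b} → a ≠ b → I.des j → I.acc s j →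
            (a = Sum.inl j ∨ a = Sum.inr j) → (b = Sum.inl k ∨ b = Sum.inr k) →
            (s, a) ∈ M → (s, b) ∈ M → I.J.credits b = 1 →
            I.wrank j < I.wrank k → False := by
          intro a b j k hc hab hdj haj hja hkb hma hmb cb1 hw
          have hjk' : j ≠ k := by
            rintro rfl; exact absurd hw (lt_irrefl _)
          have hrkb : 3 * I.wrank k ≤ I.Jrank b := (I.Jrank_bounds b k hkb).1
          have hsub : ({b} : Finset (Fin n ⊕ Fin n)) ⊆ CM M s := by
            intro x hx; rw [Finset.mem_singleton] at hx; subst hx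
            exact mem_CM_iff.2 hmb
          have hOD : I.J.O {b} = 1 := by rw [CA.O, Finset.sum_singleton, cb1]
          have haccb : I.Jacc s b := hacc _ hmb
          rcases hja with rfl | rfl
          · -- a = inl j, target inr j
            have hnm : (s, Sum.inr j) ∉ M := by
              intro hm
              have hx := mem_CM_iff.2 hm
              rw [hc] at hx
              rcases Finset.mem_insert.1 hx with h | h
              · exact nomatch h
              · rw [Finset.mem_singleton] at h
                rcases hkb with rfl | rfl
                · exact nomatch h
                · exact hjk' (Sum.inr.inj h)
            refine blockc j (Sum.inr j) hdj haj (Or.inr rfl) hnm (Or.inl hma) {b} hsub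
              ?_ (by rw [hOD]) (by rw [hOD, hO2]; norm_num)
            intro c' hc'; rw [Finset.mem_singleton] at hc'
            have hlt : I.Jrank (Sum.inr j) < I.Jrank c' := by
              rw [hc', I.Jrank_inr]; omega
            exact ⟨⟨hdj, haj⟩, hc' ▸ haccb, Or.inl hlt⟩
          · -- a = inr j, target inl j
            have hnm : (s, Sum.inl j) ∉ M := by
              intro hm
              have hx := mem_CM_iff.2 hm
              rw [hc] at hx
              rcases Finset.mem_insert.1 hx with h | h
              · exact nomatch h
              · rw [Finset.mem_singleton] at h
                rcases hkb with rfl | rfl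
                · exact hjk' (Sum.inl.inj h)
                · exact nomatch h
            refine blockc j (Sum.inl j) hdj haj (Or.inl rfl) hnm (Or.inr hma) {b} hsub
              ?_ (by rw [hOD]) (by rw [hOD, hO2]; norm_num)
            intro c' hc'; rw [Finset.mem_singleton] at hc'
            have hlt : I.Jrank (Sum.inl j) < I.Jrank c' := by
              rw [hc', I.Jrank_inl_des hdj]; omega
            exact ⟨haj, hc' ▸ haccb, Or.inl hlt⟩
        rcases lt_or_gt_of_ne (I.des_wrank_ne hdj hdk hjk) with hw | hw
        · exact pairblock a b j k hc hab hdj haj hja hkb hma hmb cb1 hw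
        · exact pairblock b a k j (by rw [hc, Finset.pair_comm]) (Ne.symm hab)
            hdk hak hkb hja hmb hma ca1 hw
  refine ⟨?_, fun s hne => key _ s rfl hne⟩
  intro s k hdes hm
  rcases key _ s rfl ⟨Sum.inl k, mem_CM_iff.2 hm⟩ with ⟨j, hc2, hCM⟩ | ⟨k', _, hCM⟩
  · exfalso
    have hx : Sum.inl k ∈ CM M s := mem_CM_iff.2 hm
    rw [hCM, Finset.mem_singleton] at hx
    have : k = j := Sum.inl.inj hx
    subst this
    rw [RSMTI.J_credits_inl, if_pos hdes] at hc2; norm_num at hc2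
  · have hx : Sum.inl k ∈ ({Sum.inl k', Sum.inr k'} : Finset (Fin n ⊕ Fin n)) :=
      hCM ▸ mem_CM_iff.2 hm
    have hk : k = k' := by
      rcases Finset.mem_insert.1 hx with h | h
      · exact Sum.inl.inj h
      · rw [Finset.mem_singleton] at h; exact nomatch h
    subst hk
    exact mem_CM_iff.1 (by rw [hCM]; simp)
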